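/- Let (T, ≤) be a partial order whose strict order < is well-founded. For p ∈ T let suc(p) := {q ∈ T : p < q and there is no r with p < r < q}, and let L(p) := {(p₁, p₂) : p₁ < p₂ ≤ p and p₂ ∈ suc(p₁)}. Assume that for every p ∈ T the set suc(p) has cardinality 𝔠 = 2^{ℵ₀} and the set L(p) has cardinality strictly less than 𝔠. Let C be a type of cardinality 𝔠. Then there exists a function H assigning to each pair (p, q) with q ∈ suc(p) an element H(p, q) ∈ C such that for every p ∈ T, the map q ↦ H(p, q) is injective on suc(p) and its image equals C ∖ {H(p₁, p₂) : (p₁, p₂) ∈ L(p)}. -/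
import Mathlib

/-- The set of immediate successors of `p`. -/
def sucSet {T : Type*} [PartialOrder T] (p : T) : Set T :=
  {q | p < q ∧ ¬∃ r, p < r ∧ r < q}

/-- The set of pairs `(p₁, p₂)` with `p₁ < p₂ ≤ p` and `p₂` an immediate
successor of `p₁`. -/
def LSet {T : Type*} [PartialOrder T] (p : T) : Set (T × T) :=
  {x | x.1 < x.2 ∧ x.2 ≤ p ∧ x.2 ∈ sucSet x.1}

noncomputable section StmtAux

open scoped Classical

variable {T C : Type*} [PartialOrder T]

/-- Labels used below `p` according to a labeling `g`. -/
def usedSet (g : T → T → C) (p : T) : Set C := {c | ∃ x ∈ LSet p, g x.1 x.2 = c}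

/-- Deterministic choice of a labeling of immediate successors of `p` avoiding `S`. -/
def pickFun [Nonempty C] (p : T) (S : Set C) : T → C :=
  if h : Nonempty (↥(sucSet p) ≃ ↥(Sᶜ)) then
    fun q => if hq : q ∈ sucSet p then ((Classical.choice h) ⟨q, hq⟩ : C)
             else Classical.arbitrary C
  else fun _ => Classical.arbitrary C

/-- The labeling, defined by well-founded recursion on the larger element. -/
def Hfun [Nonempty C] (hwf : WellFounded ((· < ·) : T → T → Prop)) : T → T → C :=
  fun p q =>
    (hwf.fix (C := fun _ => T → C) (fun q rec p =>
      pickFun p {c | ∃ x ∈ LSet p,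
        (if hb : x.2 < q then rec x.2 hb x.1 else Classical.arbitrary C) = c} q) q) p

theorem Hfun_eq [Nonempty C] (hwf : WellFounded ((· < ·) : T → T → Prop))
    {p q : T} (h : q ∈ sucSet p) :
    Hfun (C := C) hwf p q = pickFun p (usedSet (Hfun (C := C) hwf) p) q := by
  have hfix := hwf.fix_eq (C := fun _ => T → C) (fun q rec p =>
      pickFun p {c | ∃ x ∈ LSet p,
        (if hb : x.2 < q then rec x.2 hb x.1 else Classical.arbitrary C) = c} q) q
  unfold Hfun
  rw [hfix]
  refine congrArg (fun S => pickFun p S q) ?_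
  ext c
  constructor
  · rintro ⟨x, hx, hc⟩
    have hb : x.2 < q := lt_of_le_of_lt hx.2.1 h.1
    rw [dif_pos hb] at hc
    exact ⟨x, hx, hc⟩
  · rintro ⟨x, hx, hc⟩
    have hb : x.2 < q := lt_of_le_of_lt hx.2.1 h.1
    exact ⟨x, hx, by rw [dif_pos hb]; exact hc⟩

end StmtAux

theorem stmt6 {T C : Type*} [PartialOrder T]
    (hwf : WellFounded ((· < ·) : T → T → Prop))
    (hsuc : ∀ p : T, Cardinal.mk (sucSet p) = Cardinal.continuum)
    (hL : ∀ p : T, Cardinal.mk (LSet p) < Cardinal.continuum)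
    (hC : Cardinal.mk C = Cardinal.continuum) :
    ∃ H : T → T → C, ∀ p : T,
      Set.InjOn (H p) (sucSet p) ∧
      H p '' sucSet p = {c : C | ¬∃ x ∈ LSet p, H x.1 x.2 = c} := by
  classical
  haveI : Infinite C := by
    rw [Cardinal.infinite_iff, hC]; exact Cardinal.aleph0_le_continuum
  haveI : Nonempty C := inferInstance
  refine ⟨Hfun (C := C) hwf, fun p => ?_⟩
  have hused : Cardinal.mk (usedSet (Hfun (C := C) hwf) p) < Cardinal.continuum := by
    have himg : usedSet (Hfun (C := C) hwf) p
        = (fun x : T × T => Hfun (C := C) hwf x.1 x.2) '' LSet p := rfl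
    have h1 := Cardinal.mk_image_le_lift
      (f := fun x : T × T => Hfun (C := C) hwf x.1 x.2) (s := LSet p)
    rw [← himg] at h1
    rw [← Cardinal.lift_lt_continuum]
    exact lt_of_le_of_lt h1 (Cardinal.lift_lt_continuum.mpr (hL p))
  have hcompl : Cardinal.mk ((usedSet (Hfun (C := C) hwf) p)ᶜ : Set C)
      = Cardinal.continuum := by
    rw [Cardinal.mk_compl_of_infinite _ (by rw [hC]; exact hused), hC]
  have hne : Nonempty (↥(sucSet p) ≃ ↥((usedSet (Hfun (C := C) hwf) p)ᶜ)) := by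
    refine Cardinal.lift_mk_eq'.mp ?_
    rw [hsuc p, hcompl, Cardinal.lift_continuum, Cardinal.lift_continuum]
  set e : ↥(sucSet p) ≃ ↥((usedSet (Hfun (C := C) hwf) p)ᶜ) := Classical.choice hne with he
  have hval : ∀ q (hq : q ∈ sucSet p), Hfun (C := C) hwf p q = (e ⟨q, hq⟩ : C) := by
    intro q hq
    rw [Hfun_eq hwf hq, pickFun, dif_pos hne, dif_pos hq]
  constructor
  · intro a ha b hb hab
    rw [hval a ha, hval b hb] at hab
    exact congrArg Subtype.val (e.injective (Subtype.ext hab))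
  · ext c
    simp only [Set.mem_image, Set.mem_setOf_eq]
    constructor
    · rintro ⟨q, hq, rfl⟩
      rw [hval q hq]
      exact (e ⟨q, hq⟩).2
    · intro hc
      obtain ⟨q, hq⟩ := e.surjective ⟨c, hc⟩
      refine ⟨q.1, q.2, ?_⟩
      rw [hval q.1 q.2]
      exact congrArg Subtype.val hq
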